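/- arXiv:2207.04601 — 6 statements merged into one kernel-verified Lean document; each statement's English description precedes it below -/
import Mathlib

section
/- Let X, Y, Z be independent random variables, each exponentially distributed with rate 1, and let γ_R, γ_D, γ_E > 0 and R > 0 be real numbers. Then the probability that min( log₂((1 + γ_D·Y)/(1 + γ_E·Z)), log₂(1 + γ_R·X) ) < R (equivalently, the probability of the event { (1 + γ_D·Y)/(1 + γ_E·Z) < 2^R or 1 + γ_R·X < 2^R }) equals 1 − exp(−(2^R − 1)/γ_R − (2^R − 1)/γ_D) · (1 + (2^R/γ_D)·γ_E)^{−1}. (Secrecy outage probability of Case I, where only the relay-to-destination link is wiretapped.) -/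
open MeasureTheory ProbabilityTheory Real Set

lemma expMeasure_eq_withDensity (r : ℝ) :
    expMeasure r = MeasureTheory.volume.withDensity (exponentialPDF r) := rfl

lemma expMeasure_Iio_zero (r : ℝ) : expMeasure r (Iio 0) = 0 := by
  rw [expMeasure_eq_withDensity, withDensity_apply _ measurableSet_Iio]
  exact lintegral_exponentialPDF_of_nonpos le_rfl

lemma expMeasure_ae_nonneg (r : ℝ) : ∀ᵐ z ∂(expMeasure r), 0 ≤ z := by
  rw [ae_iff]
  have : {z : ℝ | ¬ 0 ≤ z} = Iio 0 := by ext z; simp [not_le]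
  rw [this]
  exact expMeasure_Iio_zero r

lemma measurable_exponentialPDF (r : ℝ) : Measurable (exponentialPDF r) :=
  (measurable_exponentialPDFReal r).ennreal_ofReal

lemma expMeasure_Ici {r t : ℝ} (hr : 0 < r) (ht : 0 ≤ t) :
    expMeasure r (Ici t) = ENNReal.ofReal (Real.exp (-(r * t))) := by
  haveI := isProbabilityMeasure_expMeasure hr
  have hIic : expMeasure r (Iic t) = ENNReal.ofReal (1 - Real.exp (-(r * t))) := by
    rw [expMeasure_eq_withDensity, withDensity_apply _ measurableSet_Iic,
      lintegral_exponentialPDF_eq_antiDeriv hr, if_pos ht]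
  have hsingle : expMeasure r {t} = 0 := by
    rw [expMeasure_eq_withDensity, withDensity_apply _ (measurableSet_singleton t)]
    exact setLIntegral_measure_zero _ _ (measure_singleton t)
  have hIio : expMeasure r (Iio t) = ENNReal.ofReal (1 - Real.exp (-(r * t))) := by
    rw [← hIic]
    apply measure_congr
    rw [MeasureTheory.ae_eq_set]
    refine ⟨measure_mono_null ?_ hsingle, measure_mono_null ?_ hsingle⟩ <;>
      intro x hx <;>
      simp only [mem_diff, mem_Iio, mem_Iic, not_le, not_lt, mem_singleton_iff] at hx ⊢ <;>
      linarith [hx.1, hx.2]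
  have he1 : Real.exp (-(r * t)) ≤ 1 :=
    Real.exp_le_one_iff.2 (by nlinarith)
  rw [← compl_Iio, prob_compl_eq_one_sub measurableSet_Iio, hIio,
    ← ENNReal.ofReal_one, ← ENNReal.ofReal_sub 1 (by linarith), sub_sub_cancel]

lemma key_lintegral {a b : ℝ} (ha : 0 ≤ a) (hb : 0 < b) :
    ∫⁻ z, ENNReal.ofReal (Real.exp (-(a + b * z))) ∂(expMeasure 1)
      = ENNReal.ofReal (Real.exp (-a) / (1 + b)) := by
  have hg : Measurable fun z : ℝ => ENNReal.ofReal (Real.exp (-(a + b * z))) :=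
    (Real.measurable_exp.comp (measurable_const.add (measurable_id.const_mul b)).neg).ennreal_ofReal
  rw [expMeasure_eq_withDensity, lintegral_withDensity_eq_lintegral_mul _
    (measurable_exponentialPDF 1) hg]
  have hpt : ∀ z, (exponentialPDF 1 * fun z => ENNReal.ofReal (Real.exp (-(a + b * z)))) z
      = ENNReal.ofReal (Real.exp (-a) / (1 + b)) * exponentialPDF (1 + b) z := by
    intro z
    simp only [Pi.mul_apply]
    rcases le_or_gt 0 z with hz | hz
    · rw [exponentialPDF_of_nonneg hz, exponentialPDF_of_nonneg hz,
        ← ENNReal.ofReal_mul (by positivity), ← ENNReal.ofReal_mul (by positivity)]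
      congr 1
      have h2 : Real.exp (-a) / (1 + b) * ((1 + b) * Real.exp (-((1 + b) * z)))
          = Real.exp (-a) * Real.exp (-((1 + b) * z)) := by
        field_simp
      rw [h2, one_mul, ← Real.exp_add, ← Real.exp_add]
      congr 1
      ring
    · rw [exponentialPDF_of_neg hz, exponentialPDF_of_neg hz, zero_mul, mul_zero]
  rw [lintegral_congr hpt, lintegral_const_mul _ (measurable_exponentialPDF (1 + b)),
    lintegral_exponentialPDF_eq_one (by positivity), mul_one]

/-- Secrecy outage probability of Case I (only the relay-to-destination link is wiretapped):
`X, Y, Z` are independent unit-rate exponential random variables, modeled as the three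
coordinates of the product of three unit-rate exponential measures. -/
theorem case1_SOP (γR γD γE R : ℝ) (hγR : 0 < γR) (hγD : 0 < γD) (hγE : 0 < γE)
    (hR : 0 < R) :
    ((expMeasure 1).prod ((expMeasure 1).prod (expMeasure 1)))
      {p : ℝ × ℝ × ℝ |
        (1 + γD * p.2.1) / (1 + γE * p.2.2) < (2 : ℝ) ^ R ∨ 1 + γR * p.1 < (2 : ℝ) ^ R}
      = ENNReal.ofReal
        (1 - Real.exp (-((2 : ℝ) ^ R - 1) / γR - ((2 : ℝ) ^ R - 1) / γD) *
          (1 + ((2 : ℝ) ^ R / γD) * γE)⁻¹) := by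
  haveI : IsProbabilityMeasure (expMeasure 1) := isProbabilityMeasure_expMeasure one_pos
  set c : ℝ := (2 : ℝ) ^ R with hc
  have hc1 : 1 < c := Real.one_lt_rpow_iff_of_pos (by norm_num) |>.2 (Or.inl ⟨by norm_num, hR⟩)
  have hc0 : 0 < c := by linarith
  set T : Set ℝ := Ici ((c - 1) / γR) with hT
  set S : Set (ℝ × ℝ) := {q | c ≤ (1 + γD * q.1) / (1 + γE * q.2)} with hS
  set S' : Set (ℝ × ℝ) := {q | c * (1 + γE * q.2) ≤ 1 + γD * q.1} with hS'
  have hmesS : MeasurableSet S := by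
    apply measurableSet_le measurable_const
    exact ((measurable_const.add (measurable_fst.const_mul γD)).div
      (measurable_const.add (measurable_snd.const_mul γE)))
  have hmesS' : MeasurableSet S' := by
    apply measurableSet_le
    · exact (measurable_const.add (measurable_snd.const_mul γE)).const_mul c
    · exact measurable_const.add (measurable_fst.const_mul γD)
  have hset : {p : ℝ × ℝ × ℝ |
      (1 + γD * p.2.1) / (1 + γE * p.2.2) < c ∨ 1 + γR * p.1 < c} = (T ×ˢ S)ᶜ := by
    ext p
    simp only [Set.mem_setOf_eq, Set.mem_compl_iff, Set.mem_prod, Set.mem_Ici, not_and_or,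
      not_le, hT, hS]
    have h1 : 1 + γR * p.1 < c ↔ p.1 < (c - 1) / γR := by
      rw [lt_div_iff₀ hγR]
      constructor <;> intro h <;> nlinarith [mul_comm p.1 γR]
    rw [h1]
    exact or_comm
  rw [hset, prob_compl_eq_one_sub (measurableSet_Ici.prod hmesS), Measure.prod_prod]
  have hTval : expMeasure 1 T = ENNReal.ofReal (Real.exp (-((c - 1) / γR))) := by
    rw [hT, expMeasure_Ici one_pos (div_nonneg (by linarith) hγR.le), one_mul]
  have hSS' : ((expMeasure 1).prod (expMeasure 1)) S
      = ((expMeasure 1).prod (expMeasure 1)) S' := by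
    have hnull : ((expMeasure 1).prod (expMeasure 1)) (univ ×ˢ Iio 0) = 0 := by
      rw [Measure.prod_prod, expMeasure_Iio_zero, mul_zero]
    have hiff : ∀ q : ℝ × ℝ, 0 ≤ q.2 → (q ∈ S ↔ q ∈ S') := by
      intro q hq
      simp only [hS, hS', Set.mem_setOf_eq]
      rw [le_div_iff₀ (by positivity : (0:ℝ) < 1 + γE * q.2)]
    apply measure_congr
    rw [MeasureTheory.ae_eq_set]
    constructor
    · apply measure_mono_null _ hnull
      rintro q ⟨hq1, hq2⟩
      refine ⟨trivial, ?_⟩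
      by_contra h
      exact hq2 ((hiff q (not_lt.1 h)).1 hq1)
    · apply measure_mono_null _ hnull
      rintro q ⟨hq1, hq2⟩
      refine ⟨trivial, ?_⟩
      by_contra h
      exact hq2 ((hiff q (not_lt.1 h)).2 hq1)
  have hSval : ((expMeasure 1).prod (expMeasure 1)) S
      = ENNReal.ofReal (Real.exp (-((c - 1) / γD)) / (1 + c * γE / γD)) := by
    rw [hSS', Measure.prod_apply_symm hmesS']
    have hslice : ∀ z : ℝ, (fun y => (y, z)) ⁻¹' S' = Ici ((c * (1 + γE * z) - 1) / γD) := by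
      intro z
      ext y
      simp only [hS', Set.mem_preimage, Set.mem_setOf_eq, Set.mem_Ici]
      rw [div_le_iff₀ hγD]
      constructor <;> intro h <;> nlinarith [mul_comm y γD]
    have hae : ∀ᵐ z ∂(expMeasure 1),
        expMeasure 1 ((fun y => (y, z)) ⁻¹' S')
          = ENNReal.ofReal (Real.exp (-((c - 1) / γD + (c * γE / γD) * z))) := by
      filter_upwards [expMeasure_ae_nonneg 1] with z hz
      have h1 : (0:ℝ) ≤ c * (1 + γE * z) - 1 := by nlinarith [mul_nonneg hc0.le (mul_nonneg hγE.le hz)]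
      rw [hslice z, expMeasure_Ici one_pos (div_nonneg h1 hγD.le), one_mul]
      congr 2
      field_simp
      ring
    rw [lintegral_congr_ae hae,
      key_lintegral (div_nonneg (by linarith) hγD.le) (by positivity)]
  rw [hTval, hSval, ← ENNReal.ofReal_mul (by positivity)]
  have hq : Real.exp (-((c - 1) / γR)) * (Real.exp (-((c - 1) / γD)) / (1 + c * γE / γD))
      = Real.exp (-(c - 1) / γR - (c - 1) / γD) * (1 + c / γD * γE)⁻¹ := by
    rw [show -(c - 1) / γR - (c - 1) / γD = -((c - 1) / γR) + -((c - 1) / γD) by ring,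
      Real.exp_add, div_eq_mul_inv, mul_assoc]
    congr 2
    ring
  rw [hq, ENNReal.ofReal_sub 1 (by positivity), ENNReal.ofReal_one]
end

section
/- Let X, Y, Z be independent random variables, each exponentially distributed with rate 1, and let γ_R, γ_D, γ_E > 0 and R > 0 be real numbers. Then the probability that min( log₂((1 + γ_R·X)/(1 + γ_E·Z)), log₂(1 + γ_D·Y) ) < R (equivalently, the probability of the event { (1 + γ_R·X)/(1 + γ_E·Z) < 2^R or 1 + γ_D·Y < 2^R }) equals 1 − exp(−(2^R − 1)/γ_D − (2^R − 1)/γ_R) · (1 + (2^R/γ_R)·γ_E)^{−1}. (Secrecy outage probability of Case II, where only the source-to-relay link is wiretapped.) -/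
open MeasureTheory ProbabilityTheory Real

section helpers
open Set Filter


lemma integral_exp_neg_mul_Ioi {b : ℝ} (hb : 0 < b) (s : ℝ) :
    ∫ x in Ioi s, exp (-(b * x)) = exp (-(b * s)) / b := by
  have h : ∀ x ∈ Ici s, HasDerivAt (fun y => -exp (-(b * y)) / b) (exp (-(b * x))) x := by
    intro x _
    have := (hasDerivAt_neg_exp_mul_exp (r := b) (x := x)).div_const b
    simpa [mul_div_assoc, mul_div_cancel_left₀ _ hb.ne'] using this
  have h2 : Tendsto (fun y => -exp (-(b * y)) / b) atTop (nhds 0) := by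
    have h3 : Tendsto (fun y : ℝ => exp (-(b * y))) atTop (nhds 0) :=
      Real.tendsto_exp_neg_atTop_nhds_zero.comp (Filter.tendsto_id.const_mul_atTop hb)
    simpa using (h3.neg.div_const b)
  have hint : IntegrableOn (fun x => exp (-(b * x))) (Ioi s) := by
    have := exp_neg_integrableOn_Ioi s hb
    simpa [neg_mul] using this
  have := integral_Ioi_of_hasDerivAt_of_tendsto' h hint h2
  rw [this]; field_simp; ring

lemma exp1_apply (s : Set ℝ) (hs : MeasurableSet s) :
    expMeasure 1 s = ∫⁻ x in s, exponentialPDF 1 x := by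
  rw [expMeasure, gammaMeasure, withDensity_apply _ hs]
  rfl

lemma exp1_neg : expMeasure 1 (Iio 0) = 0 := by
  rw [exp1_apply _ measurableSet_Iio]
  exact lintegral_exponentialPDF_of_nonpos le_rfl

lemma exp1_inter (s : Set ℝ) : expMeasure 1 s = expMeasure 1 (s ∩ Ici 0) := by
  have h := measure_inter_add_diff (μ := expMeasure 1) s (measurableSet_Ici (a := (0:ℝ)))
  have h0 : expMeasure 1 (s \ Ici 0) = 0 :=
    measure_mono_null (fun x hx => mem_Iio.2 (not_le.1 hx.2)) exp1_neg
  rw [← h, h0, add_zero]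

lemma exp1_Iic (c : ℝ) : expMeasure 1 (Iic c)
    = ENNReal.ofReal (if 0 ≤ c then 1 - exp (-c) else 0) := by
  rw [exp1_apply _ measurableSet_Iic, lintegral_exponentialPDF_eq_antiDeriv one_pos]
  simp

lemma exp1_Ici {c : ℝ} (hc : 0 ≤ c) : expMeasure 1 (Ici c) = ENNReal.ofReal (exp (-c)) := by
  haveI : IsProbabilityMeasure (expMeasure 1) := isProbabilityMeasure_expMeasure one_pos
  have hIio : expMeasure 1 (Iio c) = ENNReal.ofReal (1 - exp (-c)) := by
    have hs : expMeasure 1 {c} = 0 := by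
      have hac : expMeasure 1 ≪ volume := by
        rw [expMeasure, gammaMeasure]; exact withDensity_absolutelyContinuous _ _
      exact hac (measure_singleton c)
    have h2 : expMeasure 1 (Iic c) = expMeasure 1 (Iio c) + expMeasure 1 {c} := by
      rw [← measure_union (by simp) (measurableSet_singleton c), Iio_union_right]
    rw [exp1_Iic, if_pos hc, hs, add_zero] at h2
    exact h2.symm
  have hup : Ici c = (Iio c)ᶜ := by simp
  have he1 : exp (-c) ≤ 1 := exp_le_one_iff.2 (by linarith)
  rw [hup, measure_compl measurableSet_Iio (measure_ne_top _ _), hIio, measure_univ,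
    ← ENNReal.ofReal_one, ← ENNReal.ofReal_sub _ (by linarith)]
  norm_num

end helpers

section main
open Set Filter
open scoped ENNReal

/-- Secrecy outage probability of Case II (only the source-to-relay link is wiretapped):
`X, Y, Z` are independent unit-rate exponential random variables, modeled as the three
coordinates of the product of three unit-rate exponential measures. -/
theorem case2_SOP (γR γD γE R : ℝ) (hγR : 0 < γR) (hγD : 0 < γD) (hγE : 0 < γE)
    (hR : 0 < R) :
    ((expMeasure 1).prod ((expMeasure 1).prod (expMeasure 1)))
      {p : ℝ × ℝ × ℝ |
        (1 + γR * p.1) / (1 + γE * p.2.2) < (2 : ℝ) ^ R ∨ 1 + γD * p.2.1 < (2 : ℝ) ^ R}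
      = ENNReal.ofReal
        (1 - Real.exp (-((2 : ℝ) ^ R - 1) / γD - ((2 : ℝ) ^ R - 1) / γR) *
          (1 + ((2 : ℝ) ^ R / γR) * γE)⁻¹) := by
  haveI : IsProbabilityMeasure (expMeasure 1) := isProbabilityMeasure_expMeasure one_pos
  set μ := expMeasure 1 with hμdef
  set a := (2:ℝ)^R with hadef
  have ha1 : 1 < a := (Real.one_lt_rpow_iff_of_pos (by norm_num)).2 (Or.inl ⟨by norm_num, hR⟩)
  have ha0 : 0 < a := by linarith
  set yb := (a-1)/γD with hyb
  set x₀ := (a-1)/γR with hx₀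
  set k := γR/(a*γE) with hk
  have hk0 : 0 < k := by positivity
  have hx₀0 : 0 < x₀ := by rw [hx₀]; exact div_pos (by linarith) hγR
  set c : ℝ → ℝ := fun x => (1 + γR*x - a)/(a*γE) with hcdef
  have hcmeas : Measurable c := by
    apply Measurable.div_const
    exact (measurable_const.add (measurable_id.const_mul γR)).sub measurable_const
  set Ec : Set (ℝ×ℝ×ℝ) :=
    {p | a ≤ (1 + γR * p.1) / (1 + γE * p.2.2) ∧ a ≤ 1 + γD * p.2.1} with hEc
  have hfmeas : Measurable fun p : ℝ×ℝ×ℝ => (1 + γR * p.1) / (1 + γE * p.2.2) :=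
    (measurable_const.add (measurable_fst.const_mul γR)).div
      (measurable_const.add (measurable_snd.snd.const_mul γE))
  have hEcm : MeasurableSet Ec := by
    rw [hEc, setOf_and]
    exact (measurableSet_le measurable_const hfmeas).inter
      (measurableSet_le measurable_const (measurable_const.add (measurable_fst.comp
        measurable_snd |>.const_mul γD)))
  -- slice computation
  set g : ℝ → ℝ≥0∞ := fun x => ENNReal.ofReal (if 0 ≤ c x then 1 - exp (-(c x)) else 0)
    with hgdef
  have hgmeas : Measurable g := by
    apply ENNReal.measurable_ofReal.comp
    exact Measurable.ite (measurableSet_le measurable_const hcmeas)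
      (measurable_const.sub hcmeas.neg.exp) measurable_const
  have hslice : ∀ x : ℝ, (μ.prod μ) (Prod.mk x ⁻¹' Ec)
      = ENNReal.ofReal (exp (-yb)) * g x := by
    intro x
    have h1 : Prod.mk x ⁻¹' Ec = (Ici yb) ×ˢ {z : ℝ | a ≤ (1 + γR*x)/(1 + γE*z)} := by
      ext q
      simp only [hEc, mem_preimage, mem_prod, mem_Ici, mem_setOf_eq]
      constructor
      · rintro ⟨h1, h2⟩
        exact ⟨(div_le_iff₀ hγD).2 (by linarith), h1⟩
      · rintro ⟨h1, h2⟩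
        exact ⟨h2, by have := (div_le_iff₀ hγD).1 h1; linarith⟩
    rw [h1, Measure.prod_prod]
    congr 1
    · exact exp1_Ici (by rw [hyb]; exact div_nonneg (by linarith) hγD.le)
    · have h2 : {z : ℝ | a ≤ (1 + γR*x)/(1 + γE*z)} ∩ Ici 0 = Iic (c x) ∩ Ici 0 := by
        ext z
        simp only [mem_inter_iff, mem_setOf_eq, mem_Ici, mem_Iic]
        constructor
        · rintro ⟨h1, hz⟩
          refine ⟨?_, hz⟩
          have hd : (0:ℝ) < 1 + γE*z := by positivity
          have := (le_div_iff₀ hd).1 h1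
          rw [hcdef, le_div_iff₀ (by positivity : (0:ℝ) < a*γE)]
          nlinarith
        · rintro ⟨h1, hz⟩
          refine ⟨?_, hz⟩
          have hd : (0:ℝ) < 1 + γE*z := by positivity
          rw [le_div_iff₀ hd]
          rw [hcdef, le_div_iff₀ (by positivity : (0:ℝ) < a*γE)] at h1
          nlinarith
      rw [exp1_inter, h2, ← exp1_inter, exp1_Iic]
  -- the x-integral
  have hI : ∫⁻ x, g x ∂μ = ENNReal.ofReal (exp (-x₀) - exp (-x₀)/(1+k)) := by
    have hμd : μ = volume.withDensity (exponentialPDF 1) := by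
      rw [hμdef, expMeasure, gammaMeasure]
      congr 1
    have hpdfmeas : Measurable (exponentialPDF 1) :=
      ENNReal.measurable_ofReal.comp (measurable_exponentialPDFReal 1)
    rw [hμd, lintegral_withDensity_eq_lintegral_mul volume hpdfmeas hgmeas]
    set G : ℝ → ℝ := fun x =>
      (if 0 ≤ x then exp (-x) else 0) * (if 0 ≤ c x then 1 - exp (-(c x)) else 0) with hG
    have hpt : ∀ x, (exponentialPDF 1 * g) x = ENNReal.ofReal (G x) := by
      intro x
      simp only [Pi.mul_apply, hgdef, hG]
      rw [exponentialPDF_eq, ← ENNReal.ofReal_mul (by split_ifs <;> positivity)]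
      norm_num
    rw [lintegral_congr hpt,
      ← lintegral_add_compl (fun x => ENNReal.ofReal (G x)) (measurableSet_Ioi (a := x₀))]
    have hzero : ∫⁻ x in (Ioi x₀)ᶜ, ENNReal.ofReal (G x) = 0 := by
      rw [compl_Ioi]
      have hz : ∀ x ∈ Iic x₀, ENNReal.ofReal (G x) = (fun _ => (0:ℝ≥0∞)) x := by
        intro x hx
        have hcx : c x ≤ 0 := by
          rw [hcdef]
          apply div_nonpos_of_nonpos_of_nonneg _ (by positivity)
          have h3 := (le_div_iff₀ hγR).1 (show x ≤ (a-1)/γR from hx)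
          nlinarith
        have h2 : (if 0 ≤ c x then 1 - exp (-(c x)) else 0) = 0 := by
          split_ifs with h
          · have hcc : c x = 0 := le_antisymm hcx h
            simp [hcc]
          · rfl
        simp only [hG]
        rw [h2, mul_zero, ENNReal.ofReal_zero]
      rw [setLIntegral_congr_fun measurableSet_Iic hz, lintegral_zero]
    have hmain : ∫⁻ x in Ioi x₀, ENNReal.ofReal (G x)
        = ENNReal.ofReal (exp (-x₀) - exp (-x₀)/(1+k)) := by
      set H : ℝ → ℝ := fun x => exp (-x) - exp (k*x₀) * exp (-((1+k)*x)) with hH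
      have hGH : ∀ x ∈ Ioi x₀, ENNReal.ofReal (G x) = ENNReal.ofReal (H x) := by
        intro x hx
        have hxgt : x₀ < x := hx
        have hx0 : (0:ℝ) ≤ x := le_trans hx₀0.le hxgt.le
        have hc2 : c x = k*x - k*x₀ := by
          rw [hcdef, hk, hx₀]; field_simp; ring
        have hcx : 0 ≤ c x := by rw [hc2]; nlinarith
        congr 1
        simp only [hG, hH, if_pos hx0, if_pos hcx]
        rw [mul_sub, mul_one, ← exp_add, ← exp_add]
        have harg : -x + -(c x) = k*x₀ + -((1+k)*x) := by rw [hc2]; ring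
        rw [harg]
      rw [setLIntegral_congr_fun measurableSet_Ioi hGH]
      have hH0 : 0 ≤ᵐ[volume.restrict (Ioi x₀)] H := by
        refine (ae_restrict_iff' measurableSet_Ioi).2 (ae_of_all _ fun x hx => ?_)
        have he : exp (k*x₀) * exp (-((1+k)*x)) = exp (k*x₀ + -((1+k)*x)) := by
          rw [← exp_add]
        have hle : k*x₀ + -((1+k)*x) ≤ -x := by nlinarith [le_of_lt (mem_Ioi.1 hx), hk0]
        have h4 := exp_le_exp.2 hle
        simp only [hH, Pi.zero_apply]
        rw [he] at *
        linarith
      have hint1 : IntegrableOn (fun x => exp (-x)) (Ioi x₀) := by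
        simpa using exp_neg_integrableOn_Ioi x₀ one_pos
      have hint2 : IntegrableOn (fun x => exp (k*x₀) * exp (-((1+k)*x))) (Ioi x₀) := by
        apply Integrable.const_mul
        exact (exp_neg_integrableOn_Ioi x₀ (show (0:ℝ) < 1+k by positivity)).congr_fun
          (fun x _ => by beta_reduce; rw [neg_mul]) measurableSet_Ioi
      have hHint : IntegrableOn H (Ioi x₀) := hint1.sub hint2
      rw [← ofReal_integral_eq_lintegral_ofReal hHint hH0]
      congr 1
      rw [hH]
      rw [integral_sub hint1 hint2, MeasureTheory.integral_const_mul, integral_exp_neg_Ioi,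
        integral_exp_neg_mul_Ioi (show (0:ℝ) < 1+k by positivity)]
      rw [← mul_div_assoc, ← exp_add]
      have harg2 : k*x₀ + -((1+k)*x₀) = -x₀ := by ring
      rw [harg2]
    rw [hzero, hmain, add_zero]
  -- assemble
  have hEcval : (μ.prod (μ.prod μ)) Ec
      = ENNReal.ofReal (exp (-yb) * (exp (-x₀) - exp (-x₀)/(1+k))) := by
    rw [Measure.prod_apply hEcm]
    calc ∫⁻ x, (μ.prod μ) (Prod.mk x ⁻¹' Ec) ∂μ
        = ∫⁻ x, ENNReal.ofReal (exp (-yb)) * g x ∂μ := by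
          exact lintegral_congr hslice
      _ = ENNReal.ofReal (exp (-yb)) * ∫⁻ x, g x ∂μ := lintegral_const_mul _ hgmeas
      _ = _ := by rw [hI, ← ENNReal.ofReal_mul (exp_nonneg _)]
  have hset : {p : ℝ × ℝ × ℝ |
      (1 + γR * p.1) / (1 + γE * p.2.2) < a ∨ 1 + γD * p.2.1 < a} = Ecᶜ := by
    ext p
    simp only [hEc, mem_compl_iff, mem_setOf_eq, not_and_or, not_le]
  rw [hset, prob_compl_eq_one_sub hEcm, hEcval]
  have hT : exp (-yb) * (exp (-x₀) - exp (-x₀)/(1+k))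
      = exp (-(a - 1) / γD - (a - 1) / γR) * (1 + (a / γR) * γE)⁻¹ := by
    have h1 : -(a-1)/γD - (a-1)/γR = -yb + -x₀ := by rw [hyb, hx₀]; ring
    rw [h1, exp_add]
    have h2 : exp (-x₀) - exp (-x₀)/(1+k) = exp (-x₀) * (1 + (a/γR)*γE)⁻¹ := by
      rw [hk]
      field_simp
      ring
    rw [h2, mul_assoc]
  rw [hT, ← ENNReal.ofReal_one, ← ENNReal.ofReal_sub _ (by positivity)]

end main
end

section
/- Let X, Y, Z₁, Z₂ be independent random variables, each exponentially distributed with rate 1, and let γ_R, γ_D, γ_E > 0 and R > 0 be real numbers. Then the probability that min( log₂((1 + γ_R·X)/(1 + γ_E·Z₁)), log₂((1 + γ_D·Y)/(1 + γ_E·Z₂)) ) < R (equivalently, the probability of the event { (1 + γ_R·X)/(1 + γ_E·Z₁) < 2^R or (1 + γ_D·Y)/(1 + γ_E·Z₂) < 2^R }) equals 1 − exp(−(2^R − 1)/γ_D − (2^R − 1)/γ_R) · (1 + (2^R/γ_D)·γ_E)^{−1} · (1 + (2^R/γ_R)·γ_E)^{−1}. (Secrecy outage probability of Case III, where both hops are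 wiretapped.) -/
open MeasureTheory ProbabilityTheory Real

lemma expM_Iic (b : ℝ) :
    expMeasure 1 (Set.Iic b) = ENNReal.ofReal (if 0 ≤ b then 1 - rexp (-b) else 0) := by
  have h : expMeasure 1 = volume.withDensity (exponentialPDF 1) := rfl
  rw [h, withDensity_apply _ measurableSet_Iic]
  simpa using lintegral_exponentialPDF_eq_antiDeriv one_pos b

lemma sec_measure {γ γE t : ℝ} (hγ : 0 < γ) (hγE : 0 < γE) (ht : 1 < t)
    {x : ℝ} (hx : 0 ≤ x) :
    expMeasure 1 {z : ℝ | t ≤ (1 + γ * x) / (1 + γE * z)}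
      = ENNReal.ofReal (if 0 ≤ (1 + γ * x - t) / (t * γE) then
          1 - rexp (-((1 + γ * x - t) / (t * γE))) else 0) := by
  have ht0 : (0:ℝ) < t := lt_trans one_pos ht
  have h1 : (0:ℝ) < 1 + γ * x := by nlinarith
  have hset : {z : ℝ | t ≤ (1 + γ * x) / (1 + γE * z)}
      = Set.Ioc (-(1/γE)) ((1 + γ * x - t) / (t * γE)) := by
    ext z
    simp only [Set.mem_setOf_eq, Set.mem_Ioc]
    constructor
    · intro h
      have hd : 0 < 1 + γE * z := by
        rcases lt_trichotomy (1 + γE * z) 0 with h' | h' | h'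
        · exact absurd h (not_le.mpr (lt_trans (div_neg_of_pos_of_neg h1 h') ht0))
        · rw [h', div_zero] at h; linarith
        · exact h'
      rw [le_div_iff₀ hd] at h
      constructor
      · rw [show -(1/γE) = (-1)/γE by ring, div_lt_iff₀ hγE]; nlinarith
      · rw [le_div_iff₀ (mul_pos ht0 hγE)]; nlinarith
    · rintro ⟨hz1, hz2⟩
      have hd : 0 < 1 + γE * z := by
        rw [show -(1/γE) = (-1)/γE by ring, div_lt_iff₀ hγE] at hz1; nlinarith
      rw [le_div_iff₀ hd]
      rw [le_div_iff₀ (mul_pos ht0 hγE)] at hz2; nlinarith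
  rw [hset, ← (show ∀ a b : ℝ, Set.Iic b \ Set.Iic a = Set.Ioc a b from fun a b => by ext; simp [and_comm]), measure_diff_null, expM_Iic]
  rw [expM_Iic, if_neg (not_le.mpr (neg_lt_zero.mpr (by positivity))), ENNReal.ofReal_zero]

lemma key_integral {γ γE t : ℝ} (hγ : 0 < γ) (hγE : 0 < γE) (ht : 1 < t) :
    ∫⁻ x, expMeasure 1 {z : ℝ | t ≤ (1 + γ * x) / (1 + γE * z)} ∂(expMeasure 1)
      = ENNReal.ofReal (rexp (-((t - 1) / γ)) * (1 + t / γ * γE)⁻¹) := by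
  haveI : IsProbabilityMeasure (expMeasure 1) := isProbabilityMeasure_expMeasure one_pos
  have ht0 : (0:ℝ) < t := lt_trans one_pos ht
  set a : ℝ := (t - 1) / γ with ha_def
  have ha : 0 < a := div_pos (by linarith) hγ
  set c : ℝ := γ / (t * γE) with hc_def
  have hc : 0 < c := div_pos hγ (mul_pos ht0 hγE)
  set k : ℝ := 1 + c with hk_def
  have hk : (0:ℝ) < k := by linarith
  set m : ℝ := (t - 1) / (t * γE) with hm_def
  have hm : m = c * a := by rw [hm_def, hc_def, ha_def]; field_simp
  set F : ℝ → ℝ := fun x => rexp (-x) - rexp m * rexp (-(k * x)) with hF_def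
  -- Step 1: pointwise identification of the integrand
  have hpt : ∀ x : ℝ, exponentialPDF 1 x * expMeasure 1 {z : ℝ | t ≤ (1 + γ * x) / (1 + γE * z)}
      = ENNReal.ofReal (Set.indicator (Set.Ici a) F x) := by
    intro x
    by_cases hax : a ≤ x
    · have hx0 : 0 ≤ x := le_trans ha.le hax
      have hb : 0 ≤ (1 + γ * x - t) / (t * γE) := by
        apply div_nonneg _ (mul_pos ht0 hγE).le
        rw [ha_def, div_le_iff₀ hγ] at hax; nlinarith
      rw [sec_measure hγ hγE ht hx0, if_pos hb, exponentialPDF_of_nonneg hx0,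
        Set.indicator_of_mem (Set.mem_Ici.mpr hax),
        ← ENNReal.ofReal_mul (by positivity)]
      congr 1
      rw [hF_def]
      simp only [one_mul]
      rw [mul_sub, mul_one, ← Real.exp_add, ← Real.exp_add]
      congr 2
      rw [hk_def, hc_def, hm_def]; field_simp; ring
    · rw [Set.indicator_of_notMem (by simpa using hax), ENNReal.ofReal_zero]
      by_cases hx0 : 0 ≤ x
      · rw [sec_measure hγ hγE ht hx0, if_neg, ENNReal.ofReal_zero, mul_zero]
        rw [not_le] at hax ⊢
        apply div_neg_of_neg_of_pos _ (mul_pos ht0 hγE)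
        rw [ha_def, lt_div_iff₀ hγ] at hax; nlinarith
      · rw [exponentialPDF_of_neg (not_le.mp hx0), zero_mul]
  -- Step 2: reduce to a Lebesgue integral over volume
  have hmeas : Measurable fun x : ℝ =>
      expMeasure 1 {z : ℝ | t ≤ (1 + γ * x) / (1 + γE * z)} := by
    have hS : MeasurableSet {p : ℝ × ℝ | t ≤ (1 + γ * p.1) / (1 + γE * p.2)} := by
      apply measurableSet_le measurable_const
      exact ((measurable_const.add (measurable_fst.const_mul γ)).div
        (measurable_const.add (measurable_snd.const_mul γE)))
    exact measurable_measure_prodMk_left hS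
  have hpdf : Measurable fun x => exponentialPDF 1 x :=
    (measurable_exponentialPDFReal 1).ennreal_ofReal
  have h1 : ∫⁻ x, expMeasure 1 {z : ℝ | t ≤ (1 + γ * x) / (1 + γE * z)} ∂(expMeasure 1)
      = ∫⁻ x, ENNReal.ofReal (Set.indicator (Set.Ici a) F x) := by
    refine Eq.trans (lintegral_withDensity_eq_lintegral_mul volume hpdf hmeas) ?_
    exact lintegral_congr fun x => hpt x
  rw [h1]
  -- Step 3: integrability
  have hint_k : IntegrableOn (fun x => rexp m * rexp (-(k * x))) (Set.Ioi a) := by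
    have : IntegrableOn (fun x => rexp (-(k * x))) (Set.Ioi a) := by
      simpa [neg_mul] using exp_neg_integrableOn_Ioi a hk
    exact this.const_mul _
  have hIexp : IntegrableOn (fun x => rexp (-x)) (Set.Ici a) := by
    rw [integrableOn_Ici_iff_integrableOn_Ioi]
    simpa using exp_neg_integrableOn_Ioi a one_pos
  have hIexp2 : IntegrableOn (fun x => rexp m * rexp (-(k * x))) (Set.Ici a) := by
    rw [integrableOn_Ici_iff_integrableOn_Ioi]; exact hint_k
  have hFint : IntegrableOn F (Set.Ici a) := hIexp.sub hIexp2
  have hind : Integrable (Set.indicator (Set.Ici a) F) :=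
    (integrable_indicator_iff measurableSet_Ici).mpr hFint
  -- Step 4: nonnegativity of the integrand
  have hnn : 0 ≤ᵐ[volume] Set.indicator (Set.Ici a) F := by
    filter_upwards with x
    apply Set.indicator_nonneg
    intro y hy
    rw [hF_def]
    simp only
    rw [← Real.exp_add, sub_nonneg, Real.exp_le_exp]
    have h1 : c * a ≤ c * y := mul_le_mul_of_nonneg_left (Set.mem_Ici.mp hy) hc.le
    rw [hk_def]; rw [hm] at *; nlinarith
  rw [← ofReal_integral_eq_lintegral_ofReal hind hnn]
  congr 1
  -- Step 5: compute the integral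
  rw [integral_indicator measurableSet_Ici]
  rw [setIntegral_congr_set Ioi_ae_eq_Ici.symm]
  rw [integral_sub (by have := exp_neg_integrableOn_Ioi a one_pos; simp at this; exact this) hint_k]
  rw [integral_exp_neg_Ioi]
  have h2 : ∫ x in Set.Ioi a, rexp m * rexp (-(k * x)) = rexp m * (k⁻¹ * rexp (-(k * a))) := by
    rw [integral_const_mul]
    congr 1
    have := integral_comp_mul_left_Ioi (fun u => rexp (-u)) a hk
    simp only [smul_eq_mul] at this
    rw [this, integral_exp_neg_Ioi]
  rw [h2]
  have h3 : rexp m * rexp (-(k * a)) = rexp (-a) := by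
    rw [← Real.exp_add]; congr 1; rw [hm, hk_def]; ring
  have h4 : rexp m * (k⁻¹ * rexp (-(k * a))) = rexp (-a) * k⁻¹ := by
    rw [← mul_assoc, mul_comm _ k⁻¹, mul_assoc, h3]; ring
  rw [h4]
  have h5 : (1 + t / γ * γE)⁻¹ = 1 - k⁻¹ := by
    rw [hk_def, hc_def]; rw [eq_sub_iff_add_eq]
    field_simp
    ring
  rw [h5]; ring

/-- Secrecy outage probability of Case III (both hops are wiretapped):
`X, Y, Z₁, Z₂` are independent unit-rate exponential random variables, modeled as the
four coordinates of the product of four unit-rate exponential measures. -/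
theorem case3_SOP (γR γD γE R : ℝ) (hγR : 0 < γR) (hγD : 0 < γD) (hγE : 0 < γE)
    (hR : 0 < R) :
    ((expMeasure 1).prod ((expMeasure 1).prod ((expMeasure 1).prod (expMeasure 1))))
      {p : ℝ × ℝ × ℝ × ℝ |
        (1 + γR * p.1) / (1 + γE * p.2.2.1) < (2 : ℝ) ^ R ∨
        (1 + γD * p.2.1) / (1 + γE * p.2.2.2) < (2 : ℝ) ^ R}
      = ENNReal.ofReal
        (1 - Real.exp (-((2 : ℝ) ^ R - 1) / γD - ((2 : ℝ) ^ R - 1) / γR) *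
          (1 + ((2 : ℝ) ^ R / γD) * γE)⁻¹ * (1 + ((2 : ℝ) ^ R / γR) * γE)⁻¹) := by
  haveI : IsProbabilityMeasure (expMeasure 1) := isProbabilityMeasure_expMeasure one_pos
  set μ : Measure ℝ := expMeasure 1 with hμ
  set t : ℝ := (2 : ℝ) ^ R with ht_def
  have ht : 1 < t := by
    rw [ht_def, show (1:ℝ) = (2:ℝ) ^ (0:ℝ) by simp]
    exact Real.rpow_lt_rpow_left_iff one_lt_two |>.mpr hR
  -- the two planar sets
  set S1 : Set (ℝ × ℝ) := {p | t ≤ (1 + γR * p.1) / (1 + γE * p.2)} with hS1_def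
  set S2 : Set (ℝ × ℝ) := {p | t ≤ (1 + γD * p.1) / (1 + γE * p.2)} with hS2_def
  have hS1 : MeasurableSet S1 :=
    measurableSet_le measurable_const
      ((measurable_const.add (measurable_fst.const_mul γR)).div
        (measurable_const.add (measurable_snd.const_mul γE)))
  have hS2 : MeasurableSet S2 :=
    measurableSet_le measurable_const
      ((measurable_const.add (measurable_fst.const_mul γD)).div
        (measurable_const.add (measurable_snd.const_mul γE)))
  -- the event and its complement
  set S : Set (ℝ × ℝ × ℝ × ℝ) := {p | (1 + γR * p.1) / (1 + γE * p.2.2.1) < t ∨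
      (1 + γD * p.2.1) / (1 + γE * p.2.2.2) < t} with hS_def
  have hScompl : Sᶜ = {p : ℝ × ℝ × ℝ × ℝ | (p.1, p.2.2.1) ∈ S1 ∧ (p.2.1, p.2.2.2) ∈ S2} := by
    ext p
    simp only [hS_def, hS1_def, hS2_def, Set.mem_compl_iff, Set.mem_setOf_eq, not_or, not_lt]
  have hmc : MeasurableSet Sᶜ := by
    rw [hScompl]
    exact (hS1.preimage ((measurable_fst).prodMk (measurable_snd.snd.fst))).inter
      (hS2.preimage ((measurable_snd.fst).prodMk (measurable_snd.snd.snd)))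
  have hmS : MeasurableSet S := by
    have := hmc.compl; rwa [compl_compl] at this
  -- factorize the complement probability
  have hI2meas : Measurable fun y => μ (Prod.mk y ⁻¹' S2) := measurable_measure_prodMk_left hS2
  have hI1meas : Measurable fun x => μ (Prod.mk x ⁻¹' S1) := measurable_measure_prodMk_left hS1
  have hfact : (μ.prod (μ.prod (μ.prod μ))) Sᶜ
      = (∫⁻ x, μ (Prod.mk x ⁻¹' S1) ∂μ) * ∫⁻ y, μ (Prod.mk y ⁻¹' S2) ∂μ := by
    rw [Measure.prod_apply hmc]
    have hsec : ∀ x : ℝ, (μ.prod (μ.prod μ)) (Prod.mk x ⁻¹' Sᶜ)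
        = μ (Prod.mk x ⁻¹' S1) * ∫⁻ y, μ (Prod.mk y ⁻¹' S2) ∂μ := by
      intro x
      have hpre : Prod.mk x ⁻¹' Sᶜ
          = {q : ℝ × ℝ × ℝ | (x, q.2.1) ∈ S1 ∧ (q.1, q.2.2) ∈ S2} := by
        rw [hScompl]; rfl
      rw [hpre, Measure.prod_apply]
      · have hsec2 : ∀ y : ℝ, (μ.prod μ)
            (Prod.mk y ⁻¹' {q : ℝ × ℝ × ℝ | (x, q.2.1) ∈ S1 ∧ (q.1, q.2.2) ∈ S2})
            = μ (Prod.mk x ⁻¹' S1) * μ (Prod.mk y ⁻¹' S2) := by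
          intro y
          have : Prod.mk y ⁻¹' {q : ℝ × ℝ × ℝ | (x, q.2.1) ∈ S1 ∧ (q.1, q.2.2) ∈ S2}
              = (Prod.mk x ⁻¹' S1) ×ˢ (Prod.mk y ⁻¹' S2) := by
            ext r; simp only [Set.mem_preimage, Set.mem_setOf_eq, Set.mem_prod]
          rw [this, Measure.prod_prod]
        rw [lintegral_congr hsec2, lintegral_const_mul _ hI2meas]
      · exact (hS1.preimage ((measurable_const.prodMk measurable_snd.fst))).inter
          (hS2.preimage ((measurable_fst).prodMk measurable_snd.snd))
    rw [lintegral_congr hsec, lintegral_mul_const _ hI1meas]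
  -- evaluate the two integrals
  have hI1 : ∫⁻ x, μ (Prod.mk x ⁻¹' S1) ∂μ
      = ENNReal.ofReal (rexp (-((t - 1) / γR)) * (1 + t / γR * γE)⁻¹) := by
    have : ∀ x : ℝ, Prod.mk x ⁻¹' S1 = {z : ℝ | t ≤ (1 + γR * x) / (1 + γE * z)} := fun _ => rfl
    simp_rw [this]
    exact key_integral hγR hγE ht
  have hI2 : ∫⁻ y, μ (Prod.mk y ⁻¹' S2) ∂μ
      = ENNReal.ofReal (rexp (-((t - 1) / γD)) * (1 + t / γD * γE)⁻¹) := by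
    have : ∀ y : ℝ, Prod.mk y ⁻¹' S2 = {z : ℝ | t ≤ (1 + γD * y) / (1 + γE * z)} := fun _ => rfl
    simp_rw [this]
    exact key_integral hγD hγE ht
  -- put together
  have hprob := prob_compl_eq_one_sub (μ := μ.prod (μ.prod (μ.prod μ))) hmc
  rw [compl_compl] at hprob
  have hgoal : (μ.prod (μ.prod (μ.prod μ))) S
      = ENNReal.ofReal
        (1 - Real.exp (-(t - 1) / γD - (t - 1) / γR) *
          (1 + (t / γD) * γE)⁻¹ * (1 + (t / γR) * γE)⁻¹) := by
    rw [hprob, hfact, hI1, hI2, ← ENNReal.ofReal_mul (by positivity)]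
    rw [ENNReal.ofReal_sub _ (by positivity), ENNReal.ofReal_one]
    congr 2
    rw [show -(t - 1) / γD - (t - 1) / γR = -((t - 1) / γR) + -((t - 1) / γD) by ring,
      Real.exp_add]
    ring
  exact hgoal
end

section
/- Fix real numbers γ_E > 0, α > 0, and R > 0. Then lim_{γ_D → ∞} γ_D · 𝒫₁(α·γ_D, γ_D, γ_E, R) = (2^R − 1)·(1 + 1/α) + 2^R·γ_E. In particular, with γ_R = α·γ_D and γ_E fixed, the Case I secrecy outage probability satisfies 𝒫₁ ≈ 𝓜₁·γ_D^{−1} with 𝓜₁ = (2^R − 1)(1 + 1/α) + 2^R·γ_E > 0 as γ_D → ∞, so the secrecy diversity order is 1. -/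
open Filter Real

/-- Case I closed-form secrecy outage probability. -/
noncomputable def P1 (γR γD γE R : ℝ) : ℝ :=
  1 - Real.exp (-((2 : ℝ) ^ R - 1) / γR - ((2 : ℝ) ^ R - 1) / γD) *
    (1 + ((2 : ℝ) ^ R / γD) * γE)⁻¹

/-- Theorem 2 (Case I, first high-SNR scenario): with `γ_E` fixed and `γ_R = α·γ_D → ∞`,
`γ_D · 𝒫₁ → 𝓜₁ = (2^R − 1)(1 + 1/α) + 2^R·γ_E`, and `𝓜₁ > 0`
(so the secrecy diversity order is 1). -/
theorem case1_asymptotic_fixed_eve (γE α R : ℝ) (hγE : 0 < γE) (hα : 0 < α) (hR : 0 < R) :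
    Tendsto (fun γD : ℝ => γD * P1 (α * γD) γD γE R) atTop
      (nhds (((2 : ℝ) ^ R - 1) * (1 + 1 / α) + (2 : ℝ) ^ R * γE)) ∧
    0 < ((2 : ℝ) ^ R - 1) * (1 + 1 / α) + (2 : ℝ) ^ R * γE := by
  have h2R : (1 : ℝ) < (2 : ℝ) ^ R := Real.one_lt_rpow_iff_of_pos (by norm_num) |>.2 (Or.inl ⟨by norm_num, hR⟩)
  have h2Rpos : (0 : ℝ) < (2 : ℝ) ^ R := by linarith
  set c : ℝ := (2 : ℝ) ^ R - 1 with hc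
  set k : ℝ := c / α + c with hk
  set m : ℝ := (2 : ℝ) ^ R * γE with hm
  set F : ℝ → ℝ := fun t => 1 - Real.exp (-k * t) * (1 + m * t)⁻¹ with hF
  -- derivative of F at 0 is k + m
  have hlin : HasDerivAt (fun t : ℝ => -k * t) (-k) 0 := by
    simpa using (hasDerivAt_id (0 : ℝ)).const_mul (-k)
  have hexp : HasDerivAt (fun t : ℝ => Real.exp (-k * t)) (-k) 0 := by
    simpa using hlin.exp
  have hlin2 : HasDerivAt (fun t : ℝ => 1 + m * t) m 0 := by
    simpa using ((hasDerivAt_id (0 : ℝ)).const_mul m).const_add 1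
  have hinv : HasDerivAt (fun t : ℝ => (1 + m * t)⁻¹) (-m) 0 := by
    have := hlin2.inv (by norm_num)
    simpa [Pi.inv_def] using this
  have hderiv : HasDerivAt F (k + m) 0 := by
    have := (hasDerivAt_const (0 : ℝ) (1 : ℝ)).sub (hexp.mul hinv)
    simpa [F, add_comm, Pi.sub_def, Pi.mul_def] using this
  have hslope := hasDerivAt_iff_tendsto_slope.1 hderiv
  -- 1/γ tends to 0 within punctured nhds
  have hinvt : Tendsto (fun γ : ℝ => γ⁻¹) atTop (nhdsWithin (0 : ℝ) {(0 : ℝ)}ᶜ) := by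
    rw [tendsto_nhdsWithin_iff]
    refine ⟨tendsto_inv_atTop_zero, ?_⟩
    filter_upwards [eventually_gt_atTop (0 : ℝ)] with γ hγ
    exact (inv_ne_zero hγ.ne')
  have hcomp := hslope.comp hinvt
  have hM : Tendsto (fun γD : ℝ => γD * P1 (α * γD) γD γE R) atTop (nhds (k + m)) := by
    refine hcomp.congr' ?_
    filter_upwards [eventually_gt_atTop (0 : ℝ)] with γ hγ
    have hγ0 : γ ≠ 0 := hγ.ne'
    have hαγ : α * γ ≠ 0 := by positivity
    have hF0 : F 0 = 0 := by simp [F]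
    have : slope F 0 γ⁻¹ = γ * F γ⁻¹ := by
      rw [slope_def_field, hF0]
      field_simp
      ring
    rw [Function.comp_apply, this]
    congr 1
    simp only [F, P1]
    have h1 : -c / (α * γ) - c / γ = -k * γ⁻¹ := by
      field_simp [hk]
      have hαc : α * (c / α) = c := by field_simp
      rw [hk, mul_add, hαc]
      ring
    have h2 : 1 + (2 : ℝ) ^ R / γ * γE = 1 + m * γ⁻¹ := by
      rw [hm]; field_simp
    rw [h1, h2]
  constructor
  · have : k + m = ((2 : ℝ) ^ R - 1) * (1 + 1 / α) + (2 : ℝ) ^ R * γE := by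
      rw [hk, hm, hc]; field_simp; ring
    rwa [this] at hM
  · have h1α : 0 < 1 / α := by positivity
    nlinarith [mul_pos h2Rpos hγE]
end

section
/- Fix real numbers α > 0, β > 0, and R > 0, and set γ_R = α·γ_D and γ_E = (α/β)·γ_D (so that γ_R = α·γ_D = β·γ_E). Then (i) lim_{γ_D → ∞} 𝒫₁(α·γ_D, γ_D, (α/β)·γ_D, R) = 𝒫₁^lim := 1 − 1/(1 + (α/β)·2^R), and (ii) lim_{γ_D → ∞} γ_D · (𝒫₁(α·γ_D, γ_D, (α/β)·γ_D, R) − 𝒫₁^lim) = 𝓜̂₁ := (2^R − 1)(1 + 1/α) / (1 + (α/β)·2^R). -/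
open Filter Real

/-- Theorem 3 (Case I, second high-SNR scenario): with `γ_R = α·γ_D = β·γ_E → ∞`,
(i) `𝒫₁ → 𝒫₁^lim = 1 − 1/(1 + (α/β)·2^R)` and
(ii) `γ_D·(𝒫₁ − 𝒫₁^lim) → 𝓜̂₁ = (2^R − 1)(1 + 1/α)/(1 + (α/β)·2^R)`. -/
theorem case1_asymptotic_proportional (α β R : ℝ) (hα : 0 < α) (hβ : 0 < β) (hR : 0 < R) :
    Tendsto (fun γD : ℝ => P1 (α * γD) γD ((α / β) * γD) R) atTop
      (nhds (1 - (1 + (α / β) * (2 : ℝ) ^ R)⁻¹)) ∧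
    Tendsto (fun γD : ℝ =>
        γD * (P1 (α * γD) γD ((α / β) * γD) R - (1 - (1 + (α / β) * (2 : ℝ) ^ R)⁻¹)))
      atTop
      (nhds (((2 : ℝ) ^ R - 1) * (1 + 1 / α) / (1 + (α / β) * (2 : ℝ) ^ R))) := by
  set c : ℝ := (2 : ℝ) ^ R - 1 with hc
  set K : ℝ := 1 + (α / β) * (2 : ℝ) ^ R with hKdef
  set d : ℝ := c * (1 + 1 / α) with hd
  have h2R : (0 : ℝ) < (2 : ℝ) ^ R := Real.rpow_pos_of_pos two_pos R
  have hK : 0 < K := by rw [hKdef]; positivity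
  clear_value c K d
  -- eventual rewriting of P1
  have hev : ∀ᶠ γD : ℝ in atTop,
      P1 (α * γD) γD ((α / β) * γD) R = 1 - Real.exp (-(d / γD)) * K⁻¹ := by
    filter_upwards [eventually_gt_atTop (0 : ℝ)] with γD hγ
    have hγ' : γD ≠ 0 := ne_of_gt hγ
    have h1 : -c / (α * γD) - c / γD = -(d / γD) := by
      rw [hd]
      field_simp
      ring
    have h2 : 1 + ((2 : ℝ) ^ R / γD) * ((α / β) * γD) = K := by
      rw [hKdef]
      field_simp
    simp only [P1, ← hc, h1, h2]
  -- d/γD → 0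
  have hdiv : Tendsto (fun γD : ℝ => -(d / γD)) atTop (nhds 0) := by
    have := (tendsto_inv_atTop_zero (𝕜 := ℝ)).const_mul d
    simp only [mul_zero] at this
    simpa [div_eq_mul_inv] using this.neg
  have hexp : Tendsto (fun γD : ℝ => Real.exp (-(d / γD))) atTop (nhds 1) := by
    simpa [Function.comp_def] using (Real.continuous_exp.continuousAt (x := (0 : ℝ))).tendsto.comp hdiv
  constructor
  · refine Tendsto.congr' (Filter.EventuallyEq.symm hev) ?_
    have : Tendsto (fun γD : ℝ => 1 - Real.exp (-(d / γD)) * K⁻¹) atTop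
        (nhds (1 - 1 * K⁻¹)) := (tendsto_const_nhds.sub ((hexp.mul tendsto_const_nhds)))
    simpa using this
  · -- slope argument
    have h0 : HasDerivAt (fun x : ℝ => -(d * x)) (-d) 0 := by
      simpa [Pi.neg_def] using ((hasDerivAt_id (0 : ℝ)).const_mul d).neg
    have h1 : HasDerivAt (fun x : ℝ => Real.exp (-(d * x))) (-d) 0 := by
      simpa using h0.exp
    have hslope := hasDerivAt_iff_tendsto_slope.mp h1
    have hinv : Tendsto (fun γD : ℝ => γD⁻¹) atTop (nhdsWithin 0 {(0 : ℝ)}ᶜ) := by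
      apply tendsto_nhdsWithin_of_tendsto_nhds_of_eventually_within _ tendsto_inv_atTop_zero
      filter_upwards [eventually_gt_atTop (0 : ℝ)] with γD hγ
      exact (inv_ne_zero (ne_of_gt hγ))
    have hcomp : Tendsto (fun γD : ℝ => slope (fun x : ℝ => Real.exp (-(d * x))) 0 γD⁻¹)
        atTop (nhds (-d)) := hslope.comp hinv
    have hmain : Tendsto (fun γD : ℝ =>
        K⁻¹ * -(slope (fun x : ℝ => Real.exp (-(d * x))) 0 γD⁻¹)) atTop (nhds (K⁻¹ * d)) := by
      simpa using (hcomp.neg.const_mul K⁻¹)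
    have hgoal : Tendsto (fun γD : ℝ =>
        γD * (P1 (α * γD) γD ((α / β) * γD) R - (1 - K⁻¹))) atTop (nhds (K⁻¹ * d)) := by
      refine Tendsto.congr' ?_ hmain
      filter_upwards [hev, eventually_gt_atTop (0 : ℝ)] with γD hPeq hγ
      have hγ' : γD ≠ 0 := ne_of_gt hγ
      rw [hPeq, slope_def_field]
      simp only [mul_zero, neg_zero, Real.exp_zero, sub_zero]
      rw [div_eq_mul_inv d γD]
      field_simp
      ring
    have : K⁻¹ * d = d / K := by rw [div_eq_mul_inv]; ring
    rw [this] at hgoal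
    simpa [hd, hc] using hgoal
end

section
/- Fix real numbers β > 0 and R > 0, and for α > 0 define 𝒫₁^lim(α) = 1 − 1/(1 + (α/β)·2^R), 𝒫₂^lim(α) = 1 − 1/(1 + (1/β)·2^R), and 𝒫₃^lim(α) = 1 − (β/(β + α·2^R))·(β/(β + 2^R)). If α > 1 then 𝒫₃^lim(α) > 𝒫₁^lim(α) > 𝒫₂^lim(α); if 0 < α ≤ 1 then 𝒫₃^lim(α) > 𝒫₂^lim(α) ≥ 𝒫₁^lim(α), with equality in the last inequality exactly when α = 1. -/
open Real

/-- Remark 8: comparison of the limiting SOPs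
`𝒫₁^lim = 1 − 1/(1 + (α/β)·2^R)`, `𝒫₂^lim = 1 − 1/(1 + (1/β)·2^R)`,
`𝒫₃^lim = 1 − (β/(β + α·2^R))·(β/(β + 2^R))` (second high-SNR scenario). -/
theorem limit_SOP_order (β R α : ℝ) (hβ : 0 < β) (hR : 0 < R) (hα : 0 < α) :
    (1 < α →
      1 - β / (β + α * (2 : ℝ) ^ R) * (β / (β + (2 : ℝ) ^ R)) >
        1 - (1 + (α / β) * (2 : ℝ) ^ R)⁻¹ ∧
      1 - (1 + (α / β) * (2 : ℝ) ^ R)⁻¹ > 1 - (1 + (1 / β) * (2 : ℝ) ^ R)⁻¹) ∧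
    (α ≤ 1 →
      1 - β / (β + α * (2 : ℝ) ^ R) * (β / (β + (2 : ℝ) ^ R)) >
        1 - (1 + (1 / β) * (2 : ℝ) ^ R)⁻¹ ∧
      1 - (1 + (1 / β) * (2 : ℝ) ^ R)⁻¹ ≥ 1 - (1 + (α / β) * (2 : ℝ) ^ R)⁻¹ ∧
      (1 - (1 + (1 / β) * (2 : ℝ) ^ R)⁻¹ = 1 - (1 + (α / β) * (2 : ℝ) ^ R)⁻¹ ↔ α = 1)) := by
  have ht : (0:ℝ) < (2:ℝ) ^ R := rpow_pos_of_pos (by norm_num) R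
  set t := (2:ℝ) ^ R with htdef
  have h1 : (0:ℝ) < β + α * t := by positivity
  have h2 : (0:ℝ) < β + t := by positivity
  have h3 : (0:ℝ) < 1 + (α / β) * t := by positivity
  have h4 : (0:ℝ) < 1 + (1 / β) * t := by positivity
  constructor
  · intro hα1
    constructor
    · rw [gt_iff_lt, sub_lt_sub_iff_left]
      rw [div_mul_div_comm, inv_eq_one_div, div_lt_div_iff₀ (by positivity) h3]
      have hb : β * (α / β) = α := by field_simp
      nlinarith [mul_pos ht ht, mul_pos hβ ht]
    · rw [gt_iff_lt, sub_lt_sub_iff_left, inv_lt_inv₀ h3 h4]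
      have : (1:ℝ)/β * t < α/β * t := by
        apply mul_lt_mul_of_pos_right _ ht
        gcongr
      linarith
  · intro hα1
    refine ⟨?_, ?_, ?_⟩
    · rw [gt_iff_lt, sub_lt_sub_iff_left]
      rw [div_mul_div_comm, inv_eq_one_div, div_lt_div_iff₀ (by positivity) h4]
      have hb : β * (1 / β) = 1 := by field_simp
      nlinarith [mul_pos ht ht, mul_pos hβ ht, mul_pos hα ht]
    · apply sub_le_sub_left
      rw [inv_le_inv₀ h4 h3]
      have : α / β * t ≤ 1 / β * t := by
        apply mul_le_mul_of_nonneg_right _ ht.le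
        gcongr
      linarith
    · constructor
      · intro h
        have h' : (1 + 1 / β * t)⁻¹ = (1 + α / β * t)⁻¹ := by linarith
        have := inv_injective h'
        have ht' : t ≠ 0 := ne_of_gt ht
        field_simp at this
        exact mul_left_cancel₀ ht' (by linarith : t * α = t * 1)
      · rintro rfl; rfl
end
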